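/- Let A, B be real symmetric positive semidefinite n×n matrices, each of rank at least 2. Define D := {x ∈ ℝⁿ : xᵀAx < 1} and E := {x ∈ ℝⁿ : xᵀBx < 1}. If at every point z with xᵀAx = 1 = xᵀBx the vectors Az and Bz are linearly dependent, and E ∩ D ≠ ∅, then either E ⊆ D or D ⊆ E. -/

import Mathlib

open Matrix

private lemma quad_simple_root {a b c : ℝ} (h0 : 0 < c) (h1 : a + b + c < 0) :
    ∃ t : ℝ, a * t ^ 2 + b * t + c = 0 ∧ 2 * a * t + b ≠ 0 := by
  rcases eq_or_ne a 0 with rfl | ha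
  · have hb : b ≠ 0 := by intro h; rw [h] at h1; linarith
    refine ⟨-c / b, by field_simp; ring, by simpa using hb⟩
  · have hdisc : 0 < b ^ 2 - 4 * a * c := by
      rcases lt_or_gt_of_ne ha with hneg | hpos
      · nlinarith [sq_nonneg b]
      · nlinarith [sq_nonneg (2 * a + b)]
    have hs2 : Real.sqrt (b ^ 2 - 4 * a * c) ^ 2 = b ^ 2 - 4 * a * c :=
      Real.sq_sqrt hdisc.le
    have hspos : 0 < Real.sqrt (b ^ 2 - 4 * a * c) := Real.sqrt_pos.mpr hdisc
    set s := Real.sqrt (b ^ 2 - 4 * a * c)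
    have ht : 2 * a * ((s - b) / (2 * a)) + b = s := by field_simp; ring
    refine ⟨(s - b) / (2 * a), ?_, by rw [ht]; exact hspos.ne'⟩
    field_simp
    nlinarith [hs2]

theorem psd_unit_sublevel_no_transversal {n : ℕ} (A B : Matrix (Fin n) (Fin n) ℝ)
    (hA : A.PosSemidef) (hB : B.PosSemidef)
    (hrA : 2 ≤ A.rank) (hrB : 2 ≤ B.rank)
    (htrans : ∀ z : Fin n → ℝ, z ⬝ᵥ A.mulVec z = 1 → z ⬝ᵥ B.mulVec z = 1 →
      ¬ LinearIndependent ℝ ![A.mulVec z, B.mulVec z])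
    (hint : ({x : Fin n → ℝ | x ⬝ᵥ B.mulVec x < 1} ∩
      {x : Fin n → ℝ | x ⬝ᵥ A.mulVec x < 1}).Nonempty) :
    {x : Fin n → ℝ | x ⬝ᵥ B.mulVec x < 1} ⊆ {x : Fin n → ℝ | x ⬝ᵥ A.mulVec x < 1} ∨
    {x : Fin n → ℝ | x ⬝ᵥ A.mulVec x < 1} ⊆ {x : Fin n → ℝ | x ⬝ᵥ B.mulVec x < 1} := by
  by_contra hcon
  push_neg at hcon
  obtain ⟨h1, h2⟩ := hcon
  obtain ⟨u, hu1, hu2⟩ := Set.not_subset.mp h1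
  obtain ⟨v, hv1, hv2⟩ := Set.not_subset.mp h2
  simp only [Set.mem_setOf_eq, not_lt] at hu1 hu2 hv1 hv2
  -- u : q_B u < 1 ≤ q_A u ; v : q_A v < 1 ≤ q_B v
  set C : Matrix (Fin n) (Fin n) ℝ := A - B with hC
  have hAsymm : Aᵀ = A := hA.1
  have hBsymm : Bᵀ = B := hB.1
  have hCsymm : Cᵀ = C := by rw [hC, Matrix.transpose_sub, hAsymm, hBsymm]
  have hsymm : ∀ a b : Fin n → ℝ, a ⬝ᵥ C *ᵥ b = b ⬝ᵥ C *ᵥ a := by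
    intro a b
    rw [Matrix.dotProduct_mulVec, ← Matrix.mulVec_transpose, hCsymm, dotProduct_comm]
  set w : Fin n → ℝ := v - u with hw
  set al : ℝ := w ⬝ᵥ C *ᵥ w with hal
  set be : ℝ := u ⬝ᵥ C *ᵥ w with hbe
  set ga : ℝ := u ⬝ᵥ C *ᵥ u with hga
  have hqC : ∀ x : Fin n → ℝ, x ⬝ᵥ C *ᵥ x = x ⬝ᵥ A *ᵥ x - x ⬝ᵥ B *ᵥ x := by
    intro x; rw [hC, Matrix.sub_mulVec, dotProduct_sub]
  have hga_pos : 0 < ga := by rw [hga, hqC]; linarith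
  have hsum : al + 2 * be + ga < 0 := by
    have hexp : al + 2 * be + ga = v ⬝ᵥ C *ᵥ v := by
      rw [hal, hbe, hga, hw]
      have := hsymm u (v - u)
      simp only [Matrix.mulVec_sub, dotProduct_sub, sub_dotProduct] at this ⊢
      linarith
    rw [hexp, hqC]; linarith
  obtain ⟨t, ht0, ht1⟩ := quad_simple_root hga_pos hsum
  set z : Fin n → ℝ := u + t • w with hz
  have hzC : z ⬝ᵥ C *ᵥ z = al * t ^ 2 + (2 * be) * t + ga := by
    rw [hz, hal, hbe, hga]
    have := hsymm u w
    simp only [Matrix.mulVec_add, Matrix.mulVec_smul, dotProduct_add, add_dotProduct,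
      dotProduct_smul, smul_dotProduct, smul_eq_mul] at this ⊢
    linear_combination (-t) * this
  have hzC0 : z ⬝ᵥ C *ᵥ z = 0 := by rw [hzC]; exact ht0
  have hAB : z ⬝ᵥ A *ᵥ z = z ⬝ᵥ B *ᵥ z := by
    have := hqC z; rw [hzC0] at this; linarith
  have hCz : C *ᵥ z = 0 := by
    have hA2 := hA.dotProduct_mulVec_nonneg z
    simp only [star_trivial] at hA2
    rcases hA2.eq_or_lt with hc0 | hcpos
    · -- q_A z = 0, so A z = 0 and B z = 0
      have hA0 : A *ᵥ z = 0 := by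
        have := (hA.dotProduct_mulVec_zero_iff z)
        simp only [star_trivial] at this
        exact this.mp hc0.symm
      have hB0 : B *ᵥ z = 0 := by
        have := (hB.dotProduct_mulVec_zero_iff z)
        simp only [star_trivial] at this
        exact this.mp (by rw [← hAB]; exact hc0.symm)
      rw [hC, Matrix.sub_mulVec, hA0, hB0, sub_zero]
    · -- scale to the boundary
      set c : ℝ := z ⬝ᵥ A *ᵥ z with hc
      have hcpos' : 0 < c := hcpos
      set r : ℝ := Real.sqrt c with hr
      have hrpos : 0 < r := Real.sqrt_pos.mpr hcpos'
      have hr2 : r * r = c := Real.mul_self_sqrt hcpos'.le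
      set z' : Fin n → ℝ := r⁻¹ • z with hz'
      have hqz' : ∀ M : Matrix (Fin n) (Fin n) ℝ,
          z' ⬝ᵥ M *ᵥ z' = r⁻¹ * (r⁻¹ * (z ⬝ᵥ M *ᵥ z)) := by
        intro M
        rw [hz']
        simp [Matrix.mulVec_smul, smul_dotProduct, dotProduct_smul, smul_eq_mul]
      have hA1 : z' ⬝ᵥ A *ᵥ z' = 1 := by
        rw [hqz']
        field_simp
        nlinarith [hr2]
      have hB1 : z' ⬝ᵥ B *ᵥ z' = 1 := by
        rw [hqz', ← hAB]
        field_simp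
        nlinarith [hr2]
      have hnli := htrans z' hA1 hB1
      rw [LinearIndependent.pair_iff] at hnli
      push_neg at hnli
      obtain ⟨s, t', hst, hst0⟩ := hnli
      have hdot : s + t' = 0 := by
        have := congrArg (fun q => z' ⬝ᵥ q) hst
        simp only [dotProduct_add, dotProduct_smul, smul_eq_mul, dotProduct_zero,
          hA1, hB1, mul_one] at this
        linarith
      have hs0 : s ≠ 0 := by
        intro h
        exact hst0 h (by linarith)
      have hABz' : A *ᵥ z' = B *ᵥ z' := by
        have ht' : t' = -s := by linarith
        rw [ht'] at hst
        have : s • (A *ᵥ z' - B *ᵥ z') = 0 := by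
          rw [smul_sub]
          rw [neg_smul] at hst
          linear_combination (norm := module) hst
        have := smul_eq_zero.mp this
        rcases this with h | h
        · exact absurd h hs0
        · exact sub_eq_zero.mp h
      have hCz' : C *ᵥ z' = 0 := by
        rw [hC, Matrix.sub_mulVec, hABz', sub_self]
      have hzz : z = r • z' := by
        rw [hz', smul_smul, mul_inv_cancel₀ hrpos.ne', one_smul]
      rw [hzz, Matrix.mulVec_smul, hCz', smul_zero]
  -- derive contradiction with ht1
  apply ht1
  have hzw : z ⬝ᵥ C *ᵥ w = al * t + be := by
    rw [hz, hal, hbe]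
    simp only [add_dotProduct, smul_dotProduct, smul_eq_mul]
    ring
  have : z ⬝ᵥ C *ᵥ w = 0 := by
    rw [hsymm, hCz, dotProduct_zero]
  rw [hzw] at this
  linarith
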